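/- Let n ≥ 2 and Δ ≥ 0 be natural numbers with n ≥ 2Δ, and let a_1, …, a_n be natural numbers with n − Δ ≤ a_i ≤ n for each i. Let ρ = Σ_{i=1}^n (n − a_i). Then ∏_{i=1}^n (a_i!)^(1/a_i) ≤ 2πn · exp(1/(3n)) · (n/e)^n · (1 − ρ/n²)^n. -/

import Mathlib

open Finset Real Stirling

lemma diff_le12 (n : ℕ) :
    Real.log (stirlingSeq (n + 1)) - Real.log (stirlingSeq (n + 2)) ≤
      1 / (12 * ((n : ℝ) + 1)) - 1 / (12 * ((n : ℝ) + 2)) := by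
  have hx : (0:ℝ) ≤ ((1 : ℝ) / (2 * ((n:ℕ)+1 : ℕ) + 1)) ^ 2 := sq_nonneg _
  have hx1 : ((1 : ℝ) / (2 * ((n:ℕ)+1 : ℕ) + 1)) ^ 2 < 1 := by
    rw [div_pow, one_pow, div_lt_one (by positivity)]
    push_cast
    nlinarith [Nat.cast_nonneg (α := ℝ) n]
  set x : ℝ := ((1 : ℝ) / (2 * ((n:ℕ)+1 : ℕ) + 1)) ^ 2 with hxdef
  have g : HasSum (fun k : ℕ => (1/3 : ℝ) * x ^ (k + 1)) ((1/3) * (x / (1 - x))) := by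
    have h := (hasSum_geometric_of_lt_one hx hx1).mul_left ((1/3 : ℝ) * x)
    rw [show (1/3 : ℝ) * x * (1-x)⁻¹ = (1/3) * (x / (1-x)) by ring] at h
    refine h.congr_fun fun k => ?_
    rw [pow_succ']
    ring
  have hle := hasSum_le (fun k => ?_) (log_stirlingSeq_diff_hasSum n) g
  · refine hle.trans ?_
    have hxval : x = (1 / (2 * ((n:ℝ)+1) + 1))^2 := by rw [hxdef]; push_cast; ring
    have h2 : (2 * ((n:ℝ)+1) + 1) ≠ 0 := by positivity
    have h1x : (0:ℝ) < 1 - (1 / (2 * ((n:ℝ)+1) + 1))^2 := by rw [← hxval]; linarith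
    rw [hxval]
    have h1xne := h1x.ne'
    have hq : (24 + (n:ℝ) * 36 + (n:ℝ) ^ 2 * 12) ≠ 0 := by positivity
    have hinv := inv_mul_cancel₀ hq
    have heq : 1/3 * ((1 / (2*((n:ℝ)+1)+1))^2 / (1 - (1/(2*((n:ℝ)+1)+1))^2)) =
        1 / (12 * ((n : ℝ) + 1)) - 1 / (12 * ((n : ℝ) + 2)) := by
      field_simp
      have hq2 : (8 + (n:ℝ) * 12 + (n:ℝ) ^ 2 * 4) ≠ 0 := by positivity
      linear_combination 3 * inv_mul_cancel₀ hq2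
    rw [heq]
  · have : (1 : ℝ) / (2 * ((k:ℕ)+1 : ℕ) + 1) ≤ 1/3 := by
      rw [div_le_div_iff₀ (by positivity) (by norm_num)]
      push_cast; nlinarith [Nat.cast_nonneg (α := ℝ) k]
    exact mul_le_mul_of_nonneg_right this (pow_nonneg hx _)

lemma telescope12 (a : ℕ) (ha : 1 ≤ a) (k : ℕ) :
    Real.log (stirlingSeq a) - 1 / (12 * (a : ℝ)) + 1 / (12 * ((a : ℝ) + k)) ≤
      Real.log (stirlingSeq (a + k)) := by
  induction k with
  | zero => simp
  | succ k ih =>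
    obtain ⟨b, rfl⟩ : ∃ b, a = b + 1 := ⟨a - 1, by omega⟩
    have h := diff_le12 (b + k)
    have e1 : b + k + 1 = b + 1 + k := by omega
    have e2 : b + k + 2 = b + 1 + (k + 1) := by omega
    rw [e1, e2] at h
    push_cast at h ih ⊢
    ring_nf at h ih ⊢
    linarith

lemma stirlingSeq_le12 (a : ℕ) (ha : 1 ≤ a) :
    stirlingSeq a ≤ Real.sqrt π * Real.exp (1 / (12 * (a : ℝ))) := by
  have hpos : 0 < stirlingSeq a := by
    obtain ⟨b, rfl⟩ : ∃ b, a = b + 1 := ⟨a - 1, by omega⟩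
    exact stirlingSeq'_pos b
  have hπ : (0:ℝ) < Real.sqrt π := Real.sqrt_pos.mpr Real.pi_pos
  have hlog : Real.log (stirlingSeq a) ≤ Real.log (Real.sqrt π) + 1 / (12 * (a : ℝ)) := by
    have htend : Filter.Tendsto (fun k : ℕ => Real.log (stirlingSeq (a + k))) Filter.atTop
        (nhds (Real.log (Real.sqrt π))) := by
      have h1 : Filter.Tendsto (fun k : ℕ => a + k) Filter.atTop Filter.atTop := by
        simpa [Nat.add_comm] using Filter.tendsto_add_atTop_nat a
      exact ((Real.continuousAt_log hπ.ne').tendsto.comp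
        (tendsto_stirlingSeq_sqrt_pi.comp h1))
    have hlb : Real.log (stirlingSeq a) - 1 / (12 * (a : ℝ)) ≤ Real.log (Real.sqrt π) := by
      refine ge_of_tendsto' htend fun k => ?_
      have := telescope12 a ha k
      have hpos2 : (0:ℝ) < 1 / (12 * ((a : ℝ) + k)) := by positivity
      linarith
    linarith
  calc stirlingSeq a = Real.exp (Real.log (stirlingSeq a)) := (Real.exp_log hpos).symm
    _ ≤ Real.exp (Real.log (Real.sqrt π) + 1 / (12 * (a : ℝ))) := Real.exp_le_exp.mpr hlog
    _ = Real.sqrt π * Real.exp (1 / (12 * (a : ℝ))) := by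
        rw [Real.exp_add, Real.exp_log hπ]

lemma factorial_le_stirling (a : ℕ) (ha : 1 ≤ a) :
    (a.factorial : ℝ) ≤ Real.sqrt (2 * π * a) * ((a : ℝ) / Real.exp 1) ^ a *
      Real.exp (1 / (12 * (a : ℝ))) := by
  have hden : (0:ℝ) < Real.sqrt (2 * a) * ((a : ℝ) / Real.exp 1) ^ a := by
    have : (0:ℝ) < (a:ℝ) := by exact_mod_cast ha
    positivity
  have hfac : (a.factorial : ℝ) = stirlingSeq a * (Real.sqrt (2 * a) * ((a : ℝ) / Real.exp 1) ^ a) := by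
    rw [stirlingSeq, div_mul_cancel₀]
    exact hden.ne'
  rw [hfac]
  have h := stirlingSeq_le12 a ha
  calc stirlingSeq a * (Real.sqrt (2 * a) * ((a : ℝ) / Real.exp 1) ^ a)
      ≤ (Real.sqrt π * Real.exp (1 / (12 * (a : ℝ)))) * (Real.sqrt (2 * a) * ((a : ℝ) / Real.exp 1) ^ a) :=
        mul_le_mul_of_nonneg_right h hden.le
    _ = Real.sqrt (2 * π * a) * ((a : ℝ) / Real.exp 1) ^ a * Real.exp (1 / (12 * (a : ℝ))) := by
        rw [show (2 * π * (a:ℝ)) = π * (2 * a) by ring, Real.sqrt_mul Real.pi_pos.le]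
        ring

theorem stmt_5 (n Δ : ℕ) (hn : 2 ≤ n) (hΔn : 2 * Δ ≤ n)
    (a : Fin n → ℕ) (ha1 : ∀ i, n - Δ ≤ a i) (ha2 : ∀ i, a i ≤ n)
    (ρ : ℕ) (hρ : ρ = ∑ i, (n - a i)) :
    ∏ i, ((a i).factorial : ℝ) ^ ((1 : ℝ) / (a i : ℝ)) ≤
      2 * Real.pi * n * Real.exp (1 / (3 * (n : ℝ))) * ((n : ℝ) / Real.exp 1) ^ n *
        (1 - (ρ : ℝ) / (n : ℝ) ^ 2) ^ n := by
  have hai1 : ∀ i, 1 ≤ a i := fun i => by have := ha1 i; omega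
  have hai2 : ∀ i, n ≤ 2 * a i := fun i => by have := ha1 i; omega
  have hnR : (0:ℝ) < n := by positivity
  have hn2 : (2:ℝ) ≤ n := by exact_mod_cast hn
  have hπ3 : (3:ℝ) < π := Real.pi_gt_three
  have h2πn : (1:ℝ) ≤ 2 * π * n := by nlinarith
  have key : ∀ i, ((a i).factorial : ℝ) ^ ((1 : ℝ) / (a i : ℝ)) ≤
      (2 * π * n) ^ ((1:ℝ)/n) * Real.exp (1/(3*(n:ℝ)^2)) * ((a i : ℝ) / Real.exp 1) := by
    intro i
    have hA : (0:ℝ) < (a i : ℝ) := by exact_mod_cast hai1 i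
    have h2A : (n:ℝ) ≤ 2 * (a i : ℝ) := by exact_mod_cast hai2 i
    have hAn : (a i : ℝ) ≤ (n:ℝ) := by exact_mod_cast ha2 i
    set A : ℝ := (a i : ℝ) with hAdef
    have step1 : ((a i).factorial : ℝ) ^ ((1 : ℝ) / A) ≤
        (Real.sqrt (2 * π * A) * (A / Real.exp 1) ^ (a i) * Real.exp (1 / (12 * A))) ^ ((1:ℝ)/A) :=
      Real.rpow_le_rpow (Nat.cast_nonneg _) (factorial_le_stirling (a i) (hai1 i)) (by positivity)
    refine step1.trans ?_
    have hXpos : (0:ℝ) ≤ Real.sqrt (2 * π * A) := Real.sqrt_nonneg _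
    have hYpos : (0:ℝ) ≤ (A / Real.exp 1) ^ (a i) := by positivity
    rw [Real.mul_rpow (by positivity) (Real.exp_pos _).le, Real.mul_rpow hXpos hYpos]
    have hX : Real.sqrt (2 * π * A) ^ ((1:ℝ)/A) ≤ (2 * π * n) ^ ((1:ℝ)/n) := by
      rw [Real.sqrt_eq_rpow, ← Real.rpow_mul (by positivity)]
      calc (2 * π * A) ^ ((1/2) * (1/A)) ≤ (2 * π * (n:ℝ)) ^ ((1/2) * (1/A)) :=
            Real.rpow_le_rpow (by positivity) (by nlinarith) (by positivity)
        _ ≤ (2 * π * (n:ℝ)) ^ ((1:ℝ)/n) := by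
            apply Real.rpow_le_rpow_of_exponent_le h2πn
            rw [div_mul_div_comm, one_mul]
            exact one_div_le_one_div_of_le hnR (by nlinarith)
    have hY : ((A / Real.exp 1) ^ (a i)) ^ ((1:ℝ)/A) = A / Real.exp 1 := by
      rw [← Real.rpow_natCast (A / Real.exp 1) (a i), ← Real.rpow_mul (by positivity), ← hAdef,
        mul_one_div, div_self hA.ne', Real.rpow_one]
    have hZ : (Real.exp (1 / (12 * A))) ^ ((1:ℝ)/A) ≤ Real.exp (1/(3*(n:ℝ)^2)) := by
      rw [← Real.exp_one_rpow (1 / (12 * A)), ← Real.rpow_mul (Real.exp_pos 1).le,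
        Real.exp_one_rpow]
      apply Real.exp_le_exp.mpr
      rw [div_mul_div_comm, one_mul]
      exact one_div_le_one_div_of_le (by positivity) (by nlinarith)
    rw [hY]
    calc Real.sqrt (2 * π * A) ^ ((1:ℝ)/A) * (A / Real.exp 1) * Real.exp (1 / (12 * A)) ^ ((1:ℝ)/A)
        ≤ (2 * π * n) ^ ((1:ℝ)/n) * (A / Real.exp 1) * Real.exp (1/(3*(n:ℝ)^2)) := by
          apply mul_le_mul (mul_le_mul hX le_rfl (by positivity) (by positivity))
            hZ (by positivity) (by positivity)
      _ = (2 * π * n) ^ ((1:ℝ)/n) * Real.exp (1/(3*(n:ℝ)^2)) * (A / Real.exp 1) := by ring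
  have e1 : ((2*π*(n:ℝ)) ^ ((1:ℝ)/n))^n = 2*π*n := by
    rw [← Real.rpow_natCast _ n, ← Real.rpow_mul (by positivity),
      one_div_mul_cancel hnR.ne', Real.rpow_one]
  have e2 : (Real.exp (1/(3*(n:ℝ)^2)))^n = Real.exp (1/(3*(n:ℝ))) := by
    rw [← Real.exp_nat_mul]
    congr 1
    field_simp
  have hgm : ∏ i, (a i : ℝ) ≤ ((∑ i, (a i:ℝ)) / n) ^ n := by
    have h := Real.geom_mean_le_arith_mean_weighted Finset.univ
      (fun _ => 1/(n:ℝ)) (fun i => (a i : ℝ)) (fun i _ => by positivity)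
      (by rw [Finset.sum_const, Finset.card_univ, Fintype.card_fin, nsmul_eq_mul]
          field_simp)
      (fun i _ => Nat.cast_nonneg _)
    have hsum : ∑ i, (1/(n:ℝ)) * (a i : ℝ) = (∑ i, (a i:ℝ)) / n := by
      rw [← Finset.mul_sum]; ring
    rw [hsum] at h
    have hl : (∏ i, (a i:ℝ) ^ ((1:ℝ)/(n:ℝ))) ^ n = ∏ i, (a i : ℝ) := by
      rw [← Finset.prod_pow]
      refine Finset.prod_congr rfl fun i _ => ?_
      rw [← Real.rpow_natCast ((a i:ℝ) ^ ((1:ℝ)/(n:ℝ))) n, ← Real.rpow_mul (Nat.cast_nonneg _),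
        one_div_mul_cancel hnR.ne', Real.rpow_one]
    calc ∏ i, (a i : ℝ) = (∏ i, (a i:ℝ) ^ ((1:ℝ)/(n:ℝ))) ^ n := hl.symm
      _ ≤ ((∑ i, (a i:ℝ)) / n) ^ n :=
          pow_le_pow_left₀ (Finset.prod_nonneg fun i _ =>
            Real.rpow_nonneg (Nat.cast_nonneg _) _) h n
  have hsumA : (∑ i, (a i : ℝ)) = (n:ℝ)^2 - ρ := by
    have hnat : ρ + ∑ i, a i = n * n := by
      rw [hρ, ← Finset.sum_add_distrib]
      have hc : ∀ i ∈ Finset.univ, (n - a i) + a i = n := fun i _ => by have := ha2 i; omega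
      rw [Finset.sum_congr rfl hc, Finset.sum_const, Finset.card_univ, Fintype.card_fin,
        smul_eq_mul, mul_comm]
    have hcast := congrArg (Nat.cast : ℕ → ℝ) hnat
    push_cast at hcast
    rw [sq]
    linarith
  have hdiv : (∑ i, (a i:ℝ)) / n = (n:ℝ) * (1 - (ρ:ℝ)/(n:ℝ)^2) := by
    rw [hsumA]; field_simp
  calc ∏ i, ((a i).factorial : ℝ) ^ ((1 : ℝ) / (a i : ℝ))
      ≤ ∏ i, ((2 * π * (n:ℝ)) ^ ((1:ℝ)/n) * Real.exp (1/(3*(n:ℝ)^2)) * ((a i : ℝ) / Real.exp 1)) :=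
        Finset.prod_le_prod (fun i _ => by positivity) (fun i _ => key i)
    _ = ((2 * π * (n:ℝ)) ^ ((1:ℝ)/n))^n * (Real.exp (1/(3*(n:ℝ)^2)))^n *
          ((∏ i, (a i : ℝ)) / (Real.exp 1)^n) := by
        rw [Finset.prod_mul_distrib, Finset.prod_mul_distrib, Finset.prod_div_distrib]
        simp [Finset.card_univ]
    _ = 2*π*(n:ℝ) * Real.exp (1/(3*(n:ℝ))) * ((∏ i, (a i : ℝ)) / (Real.exp 1)^n) := by
        rw [e1, e2]
    _ ≤ 2*π*(n:ℝ) * Real.exp (1/(3*(n:ℝ))) * ((((n:ℝ) * (1 - (ρ:ℝ)/(n:ℝ)^2))^n) / (Real.exp 1)^n) := by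
        have := hgm
        rw [hdiv] at this
        gcongr
    _ = 2 * Real.pi * n * Real.exp (1 / (3 * (n : ℝ))) * ((n : ℝ) / Real.exp 1) ^ n *
          (1 - (ρ : ℝ) / (n : ℝ) ^ 2) ^ n := by
        rw [mul_pow, div_pow]
        ring
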